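/- arXiv:2211.01649 — 2 statements merged into one kernel-verified Lean document; each statement's English description precedes it below -/
import Mathlib

section
/- Axisymmetric functions are preserved by the linearized collision operator: if f : ℝ³ → ℝ has the form f(ζ) = f̃(ζ_a, |ζ̄|) for some function f̃ of two variables, then there exists a function L₀(f) of two variables such that L(f)(ζ) = L₀(f)(ζ_a, |ζ̄|) for all ζ ∈ ℝ³. -/
open MeasureTheory Real Filter

noncomputable section

/-- The velocity space `ℝ³`. -/
abbrev V3 : Type := EuclideanSpace ℝ (Fin 3)

/-- Surface measure (2-dimensional Hausdorff measure), used for sphere integrals. -/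
abbrev surf : Measure V3 := μH[2]

/-- The Gaussian weight `E(ζ) = π^{-3/2} exp(-|ζ|²)`. -/
def Egauss (ζ : V3) : ℝ := Real.pi ^ (-(3 : ℝ) / 2) * Real.exp (-‖ζ‖ ^ 2)

/-- The Gaussian-weighted bracket `⟨g⟩ = ∫ g(ζ) E(ζ) dζ`. -/
def gint (g : V3 → ℝ) : ℝ := ∫ ζ : V3, g ζ * Egauss ζ

/-- The integrand of the Boltzmann collision operator (for fixed `ζ`, integration
variables `ζs ∈ ℝ³` and `e ∈ S²`), with kernel `B`. -/
def collKer (B : ℝ → ℝ → ℝ) (F G : V3 → ℝ) (ζ ζs e : V3) : ℝ :=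
  Egauss ζs *
    (F (ζs - (inner ℝ (ζs - ζ) e : ℝ) • e) * G (ζ + (inner ℝ (ζs - ζ) e : ℝ) • e)
      + F (ζ + (inner ℝ (ζs - ζ) e : ℝ) • e) * G (ζs - (inner ℝ (ζs - ζ) e : ℝ) • e)
      - F ζs * G ζ - F ζ * G ζs)
    * B (|(inner ℝ e (ζs - ζ) : ℝ)| / ‖ζs - ζ‖) ‖ζs - ζ‖

/-- The Boltzmann collision operator `J(F,G)` with kernel `B`. -/
def collJ (B : ℝ → ℝ → ℝ) (F G : V3 → ℝ) (ζ : V3) : ℝ :=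
  (1 / 2) * ∫ ζs : V3, ∫ e in Metric.sphere (0 : V3) 1, collKer B F G ζ ζs e ∂surf

/-- The linearized collision operator `L(φ) = 2 J(1, φ)`. -/
def collL (B : ℝ → ℝ → ℝ) (φ : V3 → ℝ) (ζ : V3) : ℝ := 2 * collJ B (fun _ => 1) φ ζ

/-! ### Auxiliary lemmas -/

lemma collKer_comp (B : ℝ → ℝ → ℝ) (F G : V3 → ℝ) (R : V3 ≃ₗᵢ[ℝ] V3) (ζ ζs e : V3) :
    collKer B F G (R ζ) (R ζs) (R e) = collKer B (F ∘ R) (G ∘ R) ζ ζs e := by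
  simp only [collKer, Egauss, Function.comp_apply, ← map_sub R, ← map_smul R, ← map_add R,
    LinearIsometryEquiv.inner_map_map, LinearIsometryEquiv.norm_map]

lemma sphere_preimage (R : V3 ≃ₗᵢ[ℝ] V3) :
    (R : V3 → V3) ⁻¹' Metric.sphere 0 1 = Metric.sphere 0 1 := by
  ext x
  simp [mem_sphere_iff_norm, R.norm_map]

lemma surf_measurePreserving (R : V3 ≃ₗᵢ[ℝ] V3) :
    MeasurePreserving (R : V3 → V3) surf surf :=
  ⟨R.continuous.measurable, R.toIsometryEquiv.map_hausdorffMeasure 2⟩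

lemma sphere_integral_comp (R : V3 ≃ₗᵢ[ℝ] V3) (g : V3 → ℝ) :
    ∫ e in Metric.sphere (0 : V3) 1, g (R e) ∂surf
      = ∫ e in Metric.sphere (0 : V3) 1, g e ∂surf := by
  have h := (surf_measurePreserving R).setIntegral_preimage_emb
    R.toHomeomorph.measurableEmbedding g (Metric.sphere (0 : V3) 1)
  rwa [sphere_preimage] at h

lemma collJ_comp (B : ℝ → ℝ → ℝ) (F G : V3 → ℝ) (R : V3 ≃ₗᵢ[ℝ] V3) (ζ : V3) :
    collJ B F G (R ζ) = collJ B (F ∘ R) (G ∘ R) ζ := by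
  unfold collJ
  congr 1
  have hvol : ∫ ζs : V3, ∫ e in Metric.sphere (0 : V3) 1, collKer B F G (R ζ) ζs e ∂surf
      = ∫ ζs : V3, ∫ e in Metric.sphere (0 : V3) 1, collKer B F G (R ζ) (R ζs) e ∂surf :=
    (R.measurePreserving.integral_comp R.toHomeomorph.measurableEmbedding _).symm
  rw [hvol]
  refine integral_congr_ae (Eventually.of_forall fun ζs => ?_)
  calc ∫ e in Metric.sphere (0 : V3) 1, collKer B F G (R ζ) (R ζs) e ∂surf
      = ∫ e in Metric.sphere (0 : V3) 1, collKer B F G (R ζ) (R ζs) (R e) ∂surf :=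
        (sphere_integral_comp R _).symm
    _ = ∫ e in Metric.sphere (0 : V3) 1, collKer B (F ∘ R) (G ∘ R) ζ ζs e ∂surf := by
        refine integral_congr_ae (Eventually.of_forall fun e => ?_)
        exact collKer_comp B F G R ζ ζs e

lemma collL_comp (B : ℝ → ℝ → ℝ) (f : V3 → ℝ) (R : V3 ≃ₗᵢ[ℝ] V3) (ζ : V3) :
    collL B f (R ζ) = collL B (f ∘ R) ζ := by
  unfold collL
  rw [collJ_comp]
  rfl

/-- Axisymmetric functions are preserved by the linearized collision
operator: if `f(ζ) = f̃(ζ_a, |ζ̄|)` (where `ζ_a = ζ·a`, `ζ̄ = ζ - ζ_a a`, `a` a unit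
vector), then `L(f)(ζ) = L₀(f)(ζ_a, |ζ̄|)` for some function `L₀(f)` of two variables. -/
theorem collL_axisymmetric (B : ℝ → ℝ → ℝ) (a : V3) (ha : ‖a‖ = 1)
    (f : V3 → ℝ) (hmeas : Measurable f) (ftilde : ℝ → ℝ → ℝ)
    (hf : ∀ ζ : V3, f ζ = ftilde (inner ℝ ζ a : ℝ) ‖ζ - (inner ℝ ζ a : ℝ) • a‖) :
    ∃ L0 : ℝ → ℝ → ℝ, ∀ ζ : V3,
      collL B f ζ = L0 (inner ℝ ζ a : ℝ) ‖ζ - (inner ℝ ζ a : ℝ) • a‖ := by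
  have ha0 : a ≠ 0 := by intro h; rw [h, norm_zero] at ha; simp at ha
  -- pick a unit vector b orthogonal to a
  obtain ⟨b, hb1, hab⟩ : ∃ b : V3, ‖b‖ = 1 ∧ (inner ℝ a b : ℝ) = 0 := by
    have hK : ((ℝ ∙ a)ᗮ : Submodule ℝ V3) ≠ ⊥ := by
      intro hbot
      have h1 : Module.finrank ℝ (ℝ ∙ a : Submodule ℝ V3) = 1 :=
        finrank_span_singleton ha0
      have h3 : Module.finrank ℝ V3 = 3 := by simp [finrank_euclideanSpace]
      have := Submodule.finrank_add_finrank_orthogonal (K := (ℝ ∙ a : Submodule ℝ V3))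
      rw [h1, hbot, finrank_bot, h3] at this
      omega
    obtain ⟨v, hvmem, hv0⟩ := Submodule.exists_mem_ne_zero_of_ne_bot hK
    refine ⟨‖v‖⁻¹ • v, ?_, ?_⟩
    · rw [norm_smul, norm_inv, norm_norm, inv_mul_cancel₀ (norm_ne_zero_iff.2 hv0)]
    · have : (inner ℝ a v : ℝ) = 0 :=
        Submodule.mem_orthogonal_singleton_iff_inner_right.1 hvmem
      rw [real_inner_smul_right, this, mul_zero]
  refine ⟨fun x y => collL B f (x • a + y • b), fun ζ => ?_⟩
  set t : ℝ := (inner ℝ ζ a : ℝ) with ht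
  set w : V3 := ζ - t • a with hw
  set r : ℝ := ‖w‖ with hr
  have hnorm : ‖r • b‖ = ‖w‖ := by
    rw [norm_smul, hb1, mul_one, hr, Real.norm_eq_abs, abs_norm]
  set K : Submodule ℝ V3 := (ℝ ∙ (r • b - w))ᗮ with hK
  have haK : a ∈ K := by
    rw [hK, Submodule.mem_orthogonal_singleton_iff_inner_left]
    have h1 : (inner ℝ a (r • b) : ℝ) = 0 := by
      rw [real_inner_smul_right, hab, mul_zero]
    have h2 : (inner ℝ a w : ℝ) = 0 := by
      rw [hw, inner_sub_right, real_inner_smul_right, real_inner_self_eq_norm_sq, ha]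
      rw [ht, real_inner_comm ζ a]
      ring
    rw [inner_sub_right, h1, h2, sub_zero]
  set R : V3 ≃ₗᵢ[ℝ] V3 := Submodule.reflection K with hR
  have hRa : R a = a := Submodule.reflection_mem_subspace_eq_self haK
  have hRb : R (r • b) = w := Submodule.reflection_sub hnorm
  have hRζ : R (t • a + r • b) = ζ := by
    rw [map_add, R.map_smul, hRa, hRb, hw]
    abel
  -- f is invariant under R
  have hfR : f ∘ R = f := by
    funext u
    have hinner : (inner ℝ (R u) a : ℝ) = (inner ℝ u a : ℝ) := by
      conv_lhs => rw [← hRa]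
      exact R.inner_map_map u a
    have hsub : R u - (inner ℝ u a : ℝ) • a = R (u - (inner ℝ u a : ℝ) • a) := by
      rw [map_sub, R.map_smul, hRa]
    have hnorm2 : ‖R u - (inner ℝ u a : ℝ) • a‖ = ‖u - (inner ℝ u a : ℝ) • a‖ := by
      rw [hsub, R.norm_map]
    simp only [Function.comp_apply, hf (R u), hf u, hinner, hnorm2]
  calc collL B f ζ = collL B f (R (t • a + r • b)) := by rw [hRζ]
    _ = collL B (f ∘ R) (t • a + r • b) := collL_comp B f R _
    _ = collL B f (t • a + r • b) := by rw [hfR]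
end
end

section
/- Boundary reciprocity of the homogeneous Maxwell condition: suppose ψ^I, ψ^II : ℝ³ → ℝ (integrable against (1+|ζ|)E(ζ)) each satisfy, for every ζ with ζ·n > 0, ψ(ζ) = (1−α) ψ(ζ − 2(ζ·n)n) + α K(ψ). Then ∫_{ℝ³} (ζ·n) ψ^I(−ζ) ψ^II(ζ) E(ζ) dζ = 0. -/
open MeasureTheory Real Filter

noncomputable section

lemma Egauss_pos (ζ : V3) : 0 < Egauss ζ := by unfold Egauss; positivity

lemma Egauss_norm_eq {ζ ξ : V3} (h : ‖ζ‖ = ‖ξ‖) : Egauss ζ = Egauss ξ := by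
  unfold Egauss; rw [h]

lemma Egauss_neg (ζ : V3) : Egauss (-ζ) = Egauss ζ := Egauss_norm_eq (norm_neg ζ)

lemma aesm_mulE (ψ : V3 → ℝ)
    (hψ : Integrable (fun ζ : V3 => (1 + ‖ζ‖) * ψ ζ * Egauss ζ)) :
    AEStronglyMeasurable (fun ζ : V3 => ψ ζ * Egauss ζ) volume := by
  have hpos : ∀ ζ : V3, (0:ℝ) < 1 + ‖ζ‖ := fun ζ => by positivity
  have h1 : Continuous fun ζ : V3 => (1 + ‖ζ‖)⁻¹ := by
    apply Continuous.inv₀ (by continuity)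
    intro ζ; exact (hpos ζ).ne'
  refine (hψ.aestronglyMeasurable.mul h1.aestronglyMeasurable).congr
    (Eventually.of_forall fun ζ => ?_)
  simp only [Pi.mul_apply]
  rw [mul_comm, mul_assoc, inv_mul_cancel_left₀ (hpos ζ).ne']

lemma integrable_inner_comp (n : V3) (hn : ‖n‖ = 1) (ψ : V3 → ℝ)
    (hψ : Integrable (fun ζ : V3 => (1 + ‖ζ‖) * ψ ζ * Egauss ζ))
    (S : V3 ≃ₗᵢ[ℝ] V3) :
    Integrable (fun ζ : V3 => (inner ℝ ζ n : ℝ) * ψ (S ζ) * Egauss ζ) := by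
  have hemb : MeasurableEmbedding (S : V3 → V3) := S.toHomeomorph.measurableEmbedding
  have hmp : MeasurePreserving (S : V3 → V3) volume volume := S.measurePreserving
  have hE : ∀ ζ : V3, Egauss (S ζ) = Egauss ζ := fun ζ => Egauss_norm_eq (S.norm_map ζ)
  have hg : AEStronglyMeasurable (fun ζ : V3 => ψ ζ * Egauss ζ) volume := aesm_mulE ψ hψ
  have hgS : AEStronglyMeasurable (fun ζ : V3 => ψ (S ζ) * Egauss (S ζ)) volume :=
    (hmp.aestronglyMeasurable_comp_iff hemb).mpr hg
  have hme : AEStronglyMeasurable (fun ζ : V3 => (inner ℝ ζ n : ℝ) * ψ (S ζ) * Egauss ζ) volume := by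
    have hc : Continuous fun ζ : V3 => (inner ℝ ζ n : ℝ) := continuous_id.inner continuous_const
    refine (hc.aestronglyMeasurable.mul hgS).congr (Eventually.of_forall fun ζ => ?_)
    simp only [Pi.mul_apply]
    rw [hE ζ]; ring
  have h2 : Integrable (fun ζ : V3 => (1 + ‖S ζ‖) * ψ (S ζ) * Egauss (S ζ)) := by
    have := (hmp.integrable_comp_emb hemb).mpr hψ
    simpa [Function.comp_def] using this
  refine h2.norm.mono' hme (Eventually.of_forall fun ζ => ?_)
  have hip : |(inner ℝ ζ n : ℝ)| ≤ 1 + ‖S ζ‖ := by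
    calc |(inner ℝ ζ n : ℝ)| ≤ ‖ζ‖ * ‖n‖ := abs_real_inner_le_norm _ _
    _ = ‖S ζ‖ := by rw [hn, S.norm_map, mul_one]
    _ ≤ 1 + ‖S ζ‖ := by linarith [norm_nonneg (S ζ)]
  have hEp := Egauss_pos ζ
  have hEp' := Egauss_pos (S ζ)
  rw [Real.norm_eq_abs, Real.norm_eq_abs, abs_mul, abs_mul, abs_mul, abs_mul,
    abs_of_pos hEp, abs_of_pos hEp', hE ζ, abs_of_pos (show (0:ℝ) < 1 + ‖S ζ‖ by positivity)]
  have h0 : 0 ≤ |ψ (S ζ)| * Egauss ζ := by positivity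
  calc |(inner ℝ ζ n : ℝ)| * |ψ (S ζ)| * Egauss ζ
      = |(inner ℝ ζ n : ℝ)| * (|ψ (S ζ)| * Egauss ζ) := by ring
    _ ≤ (1 + ‖S ζ‖) * (|ψ (S ζ)| * Egauss ζ) := mul_le_mul_of_nonneg_right hip h0
    _ = (1 + ‖S ζ‖) * |ψ (S ζ)| * Egauss ζ := by ring


/-- Boundary reciprocity of the homogeneous Maxwell condition: if
`ψ^I, ψ^II` (integrable against `(1+|ζ|)E(ζ)`) each satisfy, for every `ζ` with
`ζ·n > 0`, `ψ(ζ) = (1-α) ψ(ζ - 2(ζ·n)n) + α K(ψ)` where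
`K(ψ) = -2√π ∫_{ζ·n<0} (ζ·n) ψ E dζ`, then `∫ (ζ·n) ψ^I(-ζ) ψ^II(ζ) E(ζ) dζ = 0`. -/
theorem maxwell_bc_reciprocity (n : V3) (hn : ‖n‖ = 1)
    (α : ℝ) (hα : 0 < α ∧ α ≤ 1)
    (ψI ψII : V3 → ℝ)
    (hψI : Integrable (fun ζ : V3 => (1 + ‖ζ‖) * ψI ζ * Egauss ζ))
    (hψII : Integrable (fun ζ : V3 => (1 + ‖ζ‖) * ψII ζ * Egauss ζ))
    (hprod : Integrable (fun ζ : V3 => (inner ℝ ζ n : ℝ) * ψI (-ζ) * ψII ζ * Egauss ζ))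
    (hbcI : ∀ ζ : V3, 0 < (inner ℝ ζ n : ℝ) →
      ψI ζ = (1 - α) * ψI (ζ - (2 * (inner ℝ ζ n : ℝ)) • n)
        + α * (-2 * Real.sqrt π *
            ∫ ξ in {ξ : V3 | (inner ℝ ξ n : ℝ) < 0}, (inner ℝ ξ n : ℝ) * ψI ξ * Egauss ξ))
    (hbcII : ∀ ζ : V3, 0 < (inner ℝ ζ n : ℝ) →
      ψII ζ = (1 - α) * ψII (ζ - (2 * (inner ℝ ζ n : ℝ)) • n)
        + α * (-2 * Real.sqrt π *
            ∫ ξ in {ξ : V3 | (inner ℝ ξ n : ℝ) < 0}, (inner ℝ ξ n : ℝ) * ψII ξ * Egauss ξ)) :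
    ∫ ζ : V3, (inner ℝ ζ n : ℝ) * ψI (-ζ) * ψII ζ * Egauss ζ = 0 := by
  obtain ⟨hα0, hα1⟩ := hα
  set N : Set V3 := {ξ : V3 | (inner ℝ ξ n : ℝ) < 0} with hNdef
  set P : Set V3 := {ξ : V3 | (0:ℝ) < (inner ℝ ξ n : ℝ)} with hPdef
  have hinner_cont : Continuous fun ζ : V3 => (inner ℝ ζ n : ℝ) :=
    continuous_id.inner continuous_const
  have hPm : MeasurableSet P := measurableSet_lt measurable_const hinner_cont.measurable
  -- the hyperplane is null
  have hZ : volume {ζ : V3 | (inner ℝ ζ n : ℝ) = 0} = 0 := by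
    have h : {ζ : V3 | (inner ℝ ζ n : ℝ) = 0} = ((LinearMap.ker ((innerSL ℝ n : V3 →L[ℝ] ℝ) : V3 →ₗ[ℝ] ℝ) : Submodule ℝ V3) : Set V3) := by
      ext ζ
      simp only [Set.mem_setOf_eq, SetLike.mem_coe, LinearMap.mem_ker,
        ContinuousLinearMap.coe_coe, innerSL_apply_apply, real_inner_comm]
    rw [h]
    apply Measure.addHaar_submodule
    intro h'
    have hmem : n ∈ LinearMap.ker ((innerSL ℝ n : V3 →L[ℝ] ℝ) : V3 →ₗ[ℝ] ℝ) := h' ▸ Submodule.mem_top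
    rw [LinearMap.mem_ker] at hmem
    have : (inner ℝ n n : ℝ) = 0 := hmem
    rw [real_inner_self_eq_norm_sq, hn] at this
    norm_num at this
  -- the reflection T ζ = 2(ζ·n)n - ζ
  set T : V3 ≃ₗᵢ[ℝ] V3 := Submodule.reflection (ℝ ∙ n) with hTdef
  have hTapp : ∀ ζ : V3, (T ζ : V3) = (2 * (inner ℝ ζ n : ℝ)) • n - ζ := by
    intro ζ
    rw [hTdef, Submodule.reflection_apply, Submodule.starProjection_unit_singleton ℝ hn, real_inner_comm,
      two_smul]
    module
  have hTinner : ∀ ζ : V3, (inner ℝ (T ζ) n : ℝ) = (inner ℝ ζ n : ℝ) := by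
    intro ζ
    rw [hTapp, inner_sub_left, real_inner_smul_left, real_inner_self_eq_norm_sq, hn]
    ring
  have hTT : ∀ ζ : V3, T (T ζ) = ζ := fun ζ => Submodule.reflection_reflection _ ζ
  have hRT : ∀ ζ : V3, ζ - (2 * (inner ℝ ζ n : ℝ)) • n = -(T ζ) := by
    intro ζ; rw [hTapp, neg_sub]
  have hET : ∀ ζ : V3, Egauss (-(T ζ)) = Egauss ζ := fun ζ => by
    rw [Egauss_neg, Egauss_norm_eq (T.norm_map ζ)]
  -- the isometries: negation and neg∘T
  set Sn : V3 ≃ₗᵢ[ℝ] V3 := LinearIsometryEquiv.neg ℝ with hSndef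
  have hSnapp : ∀ ζ : V3, Sn ζ = -ζ := fun _ => rfl
  set S2 : V3 ≃ₗᵢ[ℝ] V3 := T.trans Sn with hS2def
  have hS2app : ∀ ζ : V3, S2 ζ = -(T ζ) := fun _ => rfl
  have hSnP : (Sn : V3 → V3) ⁻¹' N = P := by
    ext ζ
    simp only [Set.mem_preimage, hSnapp, hNdef, hPdef, Set.mem_setOf_eq, inner_neg_left,
      neg_lt_zero]
  have hS2N : (S2 : V3 → V3) ⁻¹' N = P := by
    ext ζ
    simp only [Set.mem_preimage, hS2app, hNdef, hPdef, Set.mem_setOf_eq, inner_neg_left,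
      neg_lt_zero, hTinner ζ]
  have hTP : (T : V3 → V3) ⁻¹' P = P := by
    ext ζ
    simp only [Set.mem_preimage, hPdef, Set.mem_setOf_eq, hTinner ζ]
  -- constants
  set cI : ℝ := ∫ ξ in N, (inner ℝ ξ n : ℝ) * ψI ξ * Egauss ξ with hcI
  set cII : ℝ := ∫ ξ in N, (inner ℝ ξ n : ℝ) * ψII ξ * Egauss ξ with hcII
  set kI : ℝ := -2 * Real.sqrt π * cI with hkI
  set kII : ℝ := -2 * Real.sqrt π * cII with hkII
  set F : V3 → ℝ := fun ζ => (inner ℝ ζ n : ℝ) * ψI (-ζ) * ψII ζ * Egauss ζ with hF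
  set G : V3 → ℝ := fun ζ => (inner ℝ ζ n : ℝ) * Egauss ζ *
      (ψI (-ζ) * ((1 - α) * ψII (-(T ζ)) + α * kII)
        - ((1 - α) * ψI (-(T ζ)) + α * kI) * ψII (-ζ)) with hG
  -- split the full integral
  have hsplit : (∫ ζ in P, F ζ) + ∫ ζ in Pᶜ, F ζ = ∫ ζ, F ζ := integral_add_compl hPm hprod
  have haeeq : (Pᶜ : Set V3) =ᵐ[volume] N := by
    rw [MeasureTheory.ae_eq_set]
    constructor
    · refine measure_mono_null ?_ hZ
      intro ζ hζ
      simp only [Set.mem_diff, Set.mem_compl_iff, hPdef, hNdef, Set.mem_setOf_eq, not_lt] at hζ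
      simp only [Set.mem_setOf_eq]
      linarith [hζ.1, hζ.2]
    · have : N \ Pᶜ = ∅ := by
        ext ζ
        simp only [Set.mem_diff, Set.mem_compl_iff, hPdef, hNdef, Set.mem_setOf_eq,
          Set.mem_empty_iff_false, iff_false, not_and, not_not]
        intro h1 h2
        linarith
      rw [this]; simp
  have hcomplN : ∫ ζ in Pᶜ, F ζ = ∫ ζ in N, F ζ := setIntegral_congr_set haeeq
  have hSnemb : MeasurableEmbedding (Sn : V3 → V3) := Sn.toHomeomorph.measurableEmbedding
  have hS2emb : MeasurableEmbedding (S2 : V3 → V3) := S2.toHomeomorph.measurableEmbedding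
  have hTemb : MeasurableEmbedding (T : V3 → V3) := T.toHomeomorph.measurableEmbedding
  have hNtoP : ∫ ζ in N, F ζ = ∫ ζ in P, F (-ζ) := by
    have h := Sn.measurePreserving.setIntegral_preimage_emb hSnemb F N
    rw [hSnP] at h
    rw [← h]
    simp only [hSnapp]
  have hFnegInt : Integrable (fun ζ : V3 => F (-ζ)) := by
    have := (Sn.measurePreserving.integrable_comp_emb hSnemb).mpr hprod
    simpa [Function.comp_def, hSnapp] using this
  have hfullP : ∫ ζ, F ζ = ∫ ζ in P, (F ζ + F (-ζ)) := by
    rw [← hsplit, hcomplN, hNtoP, ← integral_add hprod.integrableOn hFnegInt.integrableOn]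
  -- rewrite using the boundary conditions on P
  have hEqOn : Set.EqOn (fun ζ : V3 => F ζ + F (-ζ)) G P := by
    intro ζ hζ
    have hζ' : 0 < (inner ℝ ζ n : ℝ) := hζ
    simp only [hF, hG]
    rw [neg_neg, inner_neg_left, Egauss_neg, hbcI ζ hζ', hbcII ζ hζ', hRT ζ]
    ring
  have hPG : ∫ ζ in P, (F ζ + F (-ζ)) = ∫ ζ in P, G ζ := setIntegral_congr_fun hPm hEqOn
  -- symmetrize with T
  have hGT : ∫ ζ in P, G (T ζ) = ∫ ζ in P, G ζ := by
    have h := T.measurePreserving.setIntegral_preimage_emb hTemb G P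
    rwa [hTP] at h
  have hadd : IntegrableOn (fun ζ : V3 => F ζ + F (-ζ)) P :=
    hprod.integrableOn.add hFnegInt.integrableOn
  have hGint : IntegrableOn G P := IntegrableOn.congr_fun hadd hEqOn hPm
  have hGTint : IntegrableOn (fun ζ : V3 => G (T ζ)) P := by
    have h := (T.measurePreserving.integrableOn_comp_preimage hTemb (s := P)).mpr hGint
    rw [hTP] at h
    exact h
  have h2G : 2 * ∫ ζ in P, G ζ = ∫ ζ in P, (G ζ + G (T ζ)) := by
    rw [integral_add hGint hGTint, hGT]; ring
  have hGsum : ∀ ζ : V3, G ζ + G (T ζ) =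
      α * kII * ((inner ℝ ζ n : ℝ) * ψI (-ζ) * Egauss ζ)
        + α * kII * ((inner ℝ ζ n : ℝ) * ψI (-(T ζ)) * Egauss ζ)
        - α * kI * ((inner ℝ ζ n : ℝ) * ψII (-ζ) * Egauss ζ)
        - α * kI * ((inner ℝ ζ n : ℝ) * ψII (-(T ζ)) * Egauss ζ) := by
    intro ζ
    simp only [hG, hTinner ζ, hTT ζ, Egauss_norm_eq (T.norm_map ζ)]
    ring
  -- integrability of the four pieces
  have hAI : Integrable (fun ζ : V3 => (inner ℝ ζ n : ℝ) * ψI (-ζ) * Egauss ζ) :=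
    integrable_inner_comp n hn ψI hψI Sn
  have hBI : Integrable (fun ζ : V3 => (inner ℝ ζ n : ℝ) * ψI (-(T ζ)) * Egauss ζ) :=
    integrable_inner_comp n hn ψI hψI S2
  have hAII : Integrable (fun ζ : V3 => (inner ℝ ζ n : ℝ) * ψII (-ζ) * Egauss ζ) :=
    integrable_inner_comp n hn ψII hψII Sn
  have hBII : Integrable (fun ζ : V3 => (inner ℝ ζ n : ℝ) * ψII (-(T ζ)) * Egauss ζ) :=
    integrable_inner_comp n hn ψII hψII S2
  -- evaluate the four half-space moments
  have hAIv : ∫ ζ in P, (inner ℝ ζ n : ℝ) * ψI (-ζ) * Egauss ζ = -cI := by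
    have h := Sn.measurePreserving.setIntegral_preimage_emb hSnemb
      (fun ξ : V3 => (inner ℝ ξ n : ℝ) * ψI ξ * Egauss ξ) N
    rw [hSnP] at h
    have heq : ∀ ζ : V3, (inner ℝ ζ n : ℝ) * ψI (-ζ) * Egauss ζ
        = -((inner ℝ (Sn ζ) n : ℝ) * ψI (Sn ζ) * Egauss (Sn ζ)) := by
      intro ζ
      simp only [hSnapp, inner_neg_left, Egauss_neg]
      ring
    simp only [heq]
    rw [integral_neg, h]
  have hAIIv : ∫ ζ in P, (inner ℝ ζ n : ℝ) * ψII (-ζ) * Egauss ζ = -cII := by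
    have h := Sn.measurePreserving.setIntegral_preimage_emb hSnemb
      (fun ξ : V3 => (inner ℝ ξ n : ℝ) * ψII ξ * Egauss ξ) N
    rw [hSnP] at h
    have heq : ∀ ζ : V3, (inner ℝ ζ n : ℝ) * ψII (-ζ) * Egauss ζ
        = -((inner ℝ (Sn ζ) n : ℝ) * ψII (Sn ζ) * Egauss (Sn ζ)) := by
      intro ζ
      simp only [hSnapp, inner_neg_left, Egauss_neg]
      ring
    simp only [heq]
    rw [integral_neg, h]
  have hBIv : ∫ ζ in P, (inner ℝ ζ n : ℝ) * ψI (-(T ζ)) * Egauss ζ = -cI := by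
    have h := S2.measurePreserving.setIntegral_preimage_emb hS2emb
      (fun ξ : V3 => (inner ℝ ξ n : ℝ) * ψI ξ * Egauss ξ) N
    rw [hS2N] at h
    have heq : ∀ ζ : V3, (inner ℝ ζ n : ℝ) * ψI (-(T ζ)) * Egauss ζ
        = -((inner ℝ (S2 ζ) n : ℝ) * ψI (S2 ζ) * Egauss (S2 ζ)) := by
      intro ζ
      simp only [hS2app, inner_neg_left, Egauss_neg, hTinner ζ,
        Egauss_norm_eq (T.norm_map ζ)]
      ring
    simp only [heq]
    rw [integral_neg, h]
  have hBIIv : ∫ ζ in P, (inner ℝ ζ n : ℝ) * ψII (-(T ζ)) * Egauss ζ = -cII := by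
    have h := S2.measurePreserving.setIntegral_preimage_emb hS2emb
      (fun ξ : V3 => (inner ℝ ξ n : ℝ) * ψII ξ * Egauss ξ) N
    rw [hS2N] at h
    have heq : ∀ ζ : V3, (inner ℝ ζ n : ℝ) * ψII (-(T ζ)) * Egauss ζ
        = -((inner ℝ (S2 ζ) n : ℝ) * ψII (S2 ζ) * Egauss (S2 ζ)) := by
      intro ζ
      simp only [hS2app, inner_neg_left, Egauss_neg, hTinner ζ,
        Egauss_norm_eq (T.norm_map ζ)]
      ring
    simp only [heq]
    rw [integral_neg, h]
  -- assemble
  have hGval : ∫ ζ in P, (G ζ + G (T ζ))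
      = α * kII * (-cI) + α * kII * (-cI) - α * kI * (-cII) - α * kI * (-cII) := by
    simp only [hGsum]
    rw [integral_sub, integral_sub, integral_add]
    · rw [integral_const_mul, integral_const_mul, integral_const_mul, integral_const_mul,
        hAIv, hBIv, hAIIv, hBIIv]
    · exact (hAI.const_mul _).integrableOn
    · exact (hBI.const_mul _).integrableOn
    · exact ((hAI.const_mul _).integrableOn.add (hBI.const_mul _).integrableOn)
    · exact (hAII.const_mul _).integrableOn
    · exact (((hAI.const_mul _).integrableOn.add
        (hBI.const_mul _).integrableOn).sub (hAII.const_mul _).integrableOn)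
    · exact (hBII.const_mul _).integrableOn
  have hzero : (2:ℝ) * ∫ ζ in P, G ζ = 0 := by
    rw [h2G, hGval, hkI, hkII]
    ring
  have hPGzero : ∫ ζ in P, G ζ = 0 := by linarith
  calc ∫ ζ : V3, F ζ = ∫ ζ in P, (F ζ + F (-ζ)) := hfullP
    _ = ∫ ζ in P, G ζ := hPG
    _ = 0 := hPGzero
end
end
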